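/- Let Γ ⊂ ℂⁿ be compact and let F be the family of p-pseudoconcave subsets of ℂⁿ \ Γ which are bounded in ℂⁿ. If (S_i) is an increasing sequence of elements of F, then the closure of the union ⋃ S_i belongs to F. -/

import Mathlib

open MeasureTheory Metric Set Filter Bornology Topology

noncomputable section

/-- `ℂⁿ` with its Euclidean structure. -/
abbrev CSp (n : ℕ) := EuclideanSpace ℂ (Fin n)

instance (n : ℕ) : MeasureSpace (CSp n) :=
  ⟨Measure.map (WithLp.toLp 2) (volume : Measure (∀ _ : Fin n, ℂ))⟩
instance (n : ℕ) : BorelSpace (CSp n) := (inferInstance : BorelSpace (PiLp 2 (fun _ : Fin n => ℂ)))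
/-- The union of the unbounded connected components of the complement of `K` in `ℂᵖ`. -/
def unbddCompl {p : ℕ} (K : Set (CSp p)) : Set (CSp p) :=
  ⋃₀ {C | C ⊆ Kᶜ ∧ IsConnected C ∧ ¬Bornology.IsBounded C}

/-- `U` is relatively open in `V`. -/
def RelOpen {n : ℕ} (V U : Set (CSp n)) : Prop := ∃ O, IsOpen O ∧ U = V ∩ O

/-- `f` is holomorphic along `V` on `W ⊆ V`: near each point of `W` it extends to a
holomorphic map of a full neighbourhood in `ℂⁿ` (for `V` open this is just holomorphy on `W`;
for `V` a submanifold this is the usual notion of holomorphy on `V`). -/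
def HolomorphicAlong {n q : ℕ} (V W : Set (CSp n)) (f : CSp n → CSp q) : Prop :=
  ∀ a ∈ W, ∃ O : Set (CSp n), IsOpen O ∧ a ∈ O ∧
    ∃ g : CSp n → CSp q, DifferentiableOn ℂ g O ∧ ∀ x ∈ O ∩ V, g x = f x

/-- `X` is a `p`-pseudoconcave subset of (the complex manifold) `V`: `X` is closed in `V` and
for every relatively open `U ⊂⊂ V` and every holomorphic map `f` from a neighbourhood of the
closure of `U` (in `V`) into `ℂᵖ`, `f(X ∩ U)` avoids the unbounded component of
`ℂᵖ \ f(X ∩ ∂U)`, where `∂U = closure U \ U` is the boundary of `U` in `V`. -/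
def IsPseudoconcave {n : ℕ} (p : ℕ) (V X : Set (CSp n)) : Prop :=
  X ⊆ V ∧ (V ∩ closure X ⊆ X) ∧
  ∀ U : Set (CSp n), RelOpen V U → IsCompact (closure U) → closure U ⊆ V →
    ∀ W : Set (CSp n), RelOpen V W → closure U ⊆ W →
      ∀ f : CSp n → CSp p, HolomorphicAlong V W f →
        f '' (X ∩ U) ⊆ (unbddCompl (f '' (X ∩ (closure U \ U))))ᶜ
lemma unbddCompl_anti {p : ℕ} {K K' : Set (CSp p)} (h : K ⊆ K') :
    unbddCompl K' ⊆ unbddCompl K :=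
  sUnion_subset_sUnion fun C hC =>
    ⟨hC.1.trans (compl_subset_compl.2 h), hC.2.1, hC.2.2⟩

lemma isOpen_unbddCompl {p : ℕ} {K : Set (CSp p)} (hK : IsClosed K) :
    IsOpen (unbddCompl K) := by
  rw [isOpen_iff_forall_mem_open]
  rintro y ⟨C, ⟨hCK, hCc, hCu⟩, hyC⟩
  refine ⟨connectedComponentIn Kᶜ y, ?_, hK.isOpen_compl.connectedComponentIn,
    mem_connectedComponentIn (hCK hyC)⟩
  apply subset_sUnion_of_mem
  refine ⟨connectedComponentIn_subset _ _,
    (isConnected_connectedComponentIn_iff).2 (hCK hyC), fun hb => hCu ?_⟩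
  exact hb.subset (hCc.isPreconnected.subset_connectedComponentIn hyC hCK)

/-- A bounded pseudoconcave subset of `Γᶜ` is contained in any ball containing `Γ`. -/
lemma pseudoconcave_subset_closedBall {n p : ℕ} (hp : 1 ≤ p) {Γ : Set (CSp n)}
    {S : Set (CSp n)} {R : ℝ} (hR : 0 < R) (hΓR : Γ ⊆ ball 0 R)
    (hS : IsPseudoconcave p Γᶜ S) (hSb : Bornology.IsBounded S) :
    S ⊆ closedBall 0 R := by
  by_contra hcon
  rw [subset_def] at hcon
  push_neg at hcon
  obtain ⟨x, hxS, hx⟩ := hcon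
  rw [mem_closedBall, dist_zero_right, not_le] at hx
  have hTc : IsCompact (closure S) := hSb.isCompact_closure
  obtain ⟨x₀, hx₀T, hmax'⟩ := hTc.exists_isMaxOn ⟨x, subset_closure hxS⟩
    continuous_norm.continuousOn
  have hmax : ∀ z ∈ closure S, ‖z‖ ≤ ‖x₀‖ := fun z hz => hmax' hz
  set r := ‖x₀‖ with hrdef
  have hrR : R < r := lt_of_lt_of_le hx (hmax x (subset_closure hxS))
  have hr0 : 0 < r := hR.trans hrR
  have hx₀Γ : x₀ ∈ Γᶜ := by
    intro h
    have := hΓR h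
    rw [mem_ball, dist_zero_right] at this
    exact absurd this (not_lt.2 hrR.le)
  have hx₀S : x₀ ∈ S := hS.2.1 ⟨hx₀Γ, hx₀T⟩
  set R' := (R + r) / 2 with hR'def
  have hR'1 : R < R' := by rw [hR'def]; linarith
  have hR'2 : R' < r := by rw [hR'def]; linarith
  have hR'0 : 0 < R' := hR.trans hR'1
  set U : Set (CSp n) := ball (0 : CSp n) (r + 1) ∩ (closedBall (0 : CSp n) R')ᶜ
    with hUdef
  have hU : IsOpen U := isOpen_ball.inter isClosed_closedBall.isOpen_compl
  have hnormU : ∀ z ∈ U, R' < ‖z‖ ∧ ‖z‖ < r + 1 := by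
    rintro z ⟨hz1, hz2⟩
    rw [mem_ball, dist_zero_right] at hz1
    rw [mem_compl_iff, mem_closedBall, dist_zero_right, not_le] at hz2
    exact ⟨hz2, hz1⟩
  have hOsub : U ⊆ Γᶜ := by
    intro z hz hzΓ
    have h1 := (hnormU z hz).1
    have h2 := hΓR hzΓ
    rw [mem_ball, dist_zero_right] at h2
    linarith
  have hUrel : RelOpen Γᶜ U := ⟨U, hU, (inter_eq_self_of_subset_right hOsub).symm⟩
  have hclU : closure U ⊆ closedBall 0 (r + 1) ∩ (ball 0 R')ᶜ := by
    apply closure_minimal _ (isClosed_closedBall.inter isOpen_ball.isClosed_compl)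
    intro z hz
    obtain ⟨h1, h2⟩ := hnormU z hz
    constructor
    · rw [mem_closedBall, dist_zero_right]; exact h2.le
    · rw [mem_compl_iff, mem_ball, dist_zero_right, not_lt]; exact h1.le
  have hnormClU : ∀ z ∈ closure U, R' ≤ ‖z‖ ∧ ‖z‖ ≤ r + 1 := by
    intro z hz
    obtain ⟨h1, h2⟩ := hclU hz
    rw [mem_closedBall, dist_zero_right] at h1
    rw [mem_compl_iff, mem_ball, dist_zero_right, not_lt] at h2
    exact ⟨h2, h1⟩
  have hUcpt : IsCompact (closure U) :=
    ((isBounded_ball.subset inter_subset_left)).isCompact_closure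
  have hUV : closure U ⊆ Γᶜ := by
    intro z hz hzΓ
    have h1 := (hnormClU z hz).1
    have h2 := hΓR hzΓ
    rw [mem_ball, dist_zero_right] at h2
    linarith
  have hWrel : RelOpen Γᶜ Γᶜ := ⟨univ, isOpen_univ, (inter_univ _).symm⟩
  set e := EuclideanSpace.single (⟨0, hp⟩ : Fin p) (1 : ℂ) with hedef
  set f : CSp n → CSp p := fun z => (innerSL ℂ x₀ z) • e with hfdef
  have hnf : ∀ z, ‖f z‖ = ‖innerSL ℂ x₀ z‖ := by
    intro z
    rw [hfdef]
    simp only [norm_smul, hedef, EuclideanSpace.norm_single, norm_one, mul_one]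
  have hfhol : HolomorphicAlong Γᶜ Γᶜ f := fun a _ =>
    ⟨univ, isOpen_univ, mem_univ a, f,
      (((innerSL ℂ x₀).differentiable).smul_const e).differentiableOn,
      fun _ _ => rfl⟩
  have happ := hS.2.2 U hUrel hUcpt hUV Γᶜ hWrel hUV f hfhol
  have hx₀U : x₀ ∈ U := by
    constructor
    · rw [mem_ball, dist_zero_right]; linarith
    · rw [mem_compl_iff, mem_closedBall, dist_zero_right, not_le]; exact hR'2
  have hfx₀ : ‖f x₀‖ = r ^ 2 := by
    rw [hnf]
    have : (innerSL ℂ x₀) x₀ = ((r ^ 2 : ℝ) : ℂ) := by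
      simpa [hrdef] using inner_self_eq_norm_sq_to_K (𝕜 := ℂ) x₀
    rw [this]
    simp [abs_of_nonneg (sq_nonneg r)]
  have hbd : ∀ w ∈ f '' (S ∩ (closure U \ U)), ‖w‖ ≤ r * R' := by
    rintro w ⟨z, ⟨hzS, hzcl, hzU⟩, rfl⟩
    have h1 : ‖z‖ ≤ r := hmax z (subset_closure hzS)
    have h2 : ‖z‖ ≤ R' := by
      by_contra h
      push_neg at h
      apply hzU
      constructor
      · rw [mem_ball, dist_zero_right]; linarith
      · rw [mem_compl_iff, mem_closedBall, dist_zero_right, not_le]; exact h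
    calc ‖f z‖ = ‖innerSL ℂ x₀ z‖ := hnf z
      _ ≤ ‖x₀‖ * ‖z‖ := norm_inner_le_norm x₀ z
      _ ≤ r * R' := by apply mul_le_mul le_rfl h2 (norm_nonneg z) hr0.le
  set C : Set (CSp p) := (fun t : ℝ => t • f x₀) '' (Ici 1) with hCdef
  have hnormC : ∀ w ∈ C, r * R' < ‖w‖ := by
    rintro w ⟨t, ht, rfl⟩
    rw [norm_smul, hfx₀, Real.norm_eq_abs, abs_of_nonneg (by linarith [mem_Ici.1 ht] : (0:ℝ) ≤ t)]
    have h1 : r * R' < r ^ 2 := by nlinarith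
    nlinarith [mem_Ici.1 ht, sq_nonneg r]
  have hCconn : IsConnected C :=
    isConnected_Ici.image _ (continuous_id.smul continuous_const).continuousOn
  have hCK : C ⊆ (f '' (S ∩ (closure U \ U)))ᶜ := by
    intro w hw hwK
    exact absurd (hbd w hwK) (not_le.2 (hnormC w hw))
  have hCunb : ¬Bornology.IsBounded C := by
    intro hb
    obtain ⟨M, hM⟩ := isBounded_iff_forall_norm_le.1 hb
    set t : ℝ := max 1 ((M + 1) / r ^ 2) with htdef
    have ht1 : 1 ≤ t := le_max_left _ _
    have hmem : t • f x₀ ∈ C := ⟨t, mem_Ici.2 ht1, rfl⟩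
    have := hM _ hmem
    rw [norm_smul, hfx₀, Real.norm_eq_abs, abs_of_nonneg (by linarith : (0:ℝ) ≤ t)] at this
    have ht2 : (M + 1) / r ^ 2 ≤ t := le_max_right _ _
    have hr2 : (0:ℝ) < r ^ 2 := by positivity
    rw [div_le_iff₀ hr2] at ht2
    linarith
  have hy : f x₀ ∈ unbddCompl (f '' (S ∩ (closure U \ U))) := by
    unfold unbddCompl
    exact ⟨C, ⟨hCK, hCconn, hCunb⟩, ⟨1, mem_Ici.2 le_rfl, one_smul _ _⟩⟩
  exact happ ⟨x₀, ⟨hx₀S, hx₀U⟩, rfl⟩ hy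
/-- Let `Γ ⊆ ℂⁿ` be compact and `F` the family of `p`-pseudoconcave subsets of
`ℂⁿ \ Γ` which are bounded in `ℂⁿ`. If `(S_i)` is an increasing sequence of elements of `F`,
then the closure (in `ℂⁿ \ Γ`) of `⋃ S_i` belongs to `F`. -/
theorem pseudoconcave_increasing_union {n : ℕ} (p : ℕ) (hp : 1 ≤ p)
    (Γ : Set (CSp n)) (hΓ : IsCompact Γ) (S : ℕ → Set (CSp n))
    (hincr : ∀ i, S i ⊆ S (i + 1))
    (hmem : ∀ i, IsPseudoconcave p Γᶜ (S i) ∧ Bornology.IsBounded (S i)) :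
    IsPseudoconcave p Γᶜ (Γᶜ ∩ closure (⋃ i, S i)) ∧
      Bornology.IsBounded (Γᶜ ∩ closure (⋃ i, S i)) := by
  have hVopen : IsOpen Γᶜ := hΓ.isClosed.isOpen_compl
  -- uniform bound on the `S i`
  obtain ⟨R₀, hR₀⟩ := hΓ.isBounded.subset_closedBall 0
  set R : ℝ := max R₀ 0 + 1 with hRdef
  have hR : 0 < R := by positivity
  have hΓR : Γ ⊆ ball 0 R := fun z hz => by
    have := hR₀ hz
    rw [mem_closedBall, dist_zero_right] at this
    rw [mem_ball, dist_zero_right]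
    calc ‖z‖ ≤ R₀ := this
      _ ≤ max R₀ 0 := le_max_left _ _
      _ < R := by rw [hRdef]; linarith
  have hSball : ∀ i, S i ⊆ closedBall 0 R := fun i =>
    pseudoconcave_subset_closedBall hp hR hΓR (hmem i).1 (hmem i).2
  have hXsub : Γᶜ ∩ closure (⋃ i, S i) ⊆ closedBall 0 R := fun z hz =>
    closure_minimal (iUnion_subset hSball) isClosed_closedBall hz.2
  refine ⟨⟨inter_subset_left, ?_, ?_⟩, isBounded_closedBall.subset hXsub⟩
  · -- relative closedness
    intro z hz
    exact ⟨hz.1, (closure_minimal inter_subset_right isClosed_closure) hz.2⟩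
  · -- the pseudoconcavity condition
    intro U hUrel hUc hUV W hWrel hUW f hf
    rintro w ⟨x, ⟨⟨hxΓ, hxcl⟩, hxU⟩, rfl⟩
    intro hy
    set X : Set (CSp n) := Γᶜ ∩ closure (⋃ i, S i) with hXdef
    set K : Set (CSp p) := f '' (X ∩ (closure U \ U)) with hKdef
    have hUopen : IsOpen U := by
      obtain ⟨O, hO, rfl⟩ := hUrel
      exact hVopen.inter hO
    -- `f` is continuous at every point of `closure U`
    have hcont : ∀ a ∈ closure U, ContinuousAt f a := by
      intro a ha
      obtain ⟨O', hO', haO', g, hg, heq⟩ := hf a (hUW ha)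
      have hgc : ContinuousAt g a := (hg.continuousOn).continuousAt (hO'.mem_nhds haO')
      have hgf : g =ᶠ[𝓝 a] f := eventually_of_mem
        ((hO'.inter hVopen).mem_nhds ⟨haO', hUV ha⟩) (fun z hz => heq z ⟨hz.1, hz.2⟩)
      exact hgc.congr hgf
    -- the boundary set is compact
    have hseteq : X ∩ (closure U \ U) =
        closure (⋃ i, S i) ∩ (closure U ∩ Uᶜ) := by
      ext z
      constructor
      · rintro ⟨⟨_, h2⟩, h3, h4⟩; exact ⟨h2, h3, h4⟩
      · rintro ⟨h2, h3, h4⟩; exact ⟨⟨hUV h3, h2⟩, h3, h4⟩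
    have hcpt : IsCompact (X ∩ (closure U \ U)) := by
      rw [hseteq]
      exact (hUc.inter_right hUopen.isClosed_compl).inter_left isClosed_closure
    have hKcpt : IsCompact K :=
      hcpt.image_of_continuousOn fun a ha => (hcont a ha.2.1).continuousWithinAt
    have hKopen : IsOpen (unbddCompl K) := isOpen_unbddCompl hKcpt.isClosed
    -- approximate `x` by points of the `S i`
    obtain ⟨u, hus, hulim⟩ := mem_closure_iff_seq_limit.1 hxcl
    choose j hj using fun k => mem_iUnion.1 (hus k)
    have hftend : Tendsto (fun k => f (u k)) atTop (𝓝 (f x)) :=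
      (hcont x (subset_closure hxU)).tendsto.comp hulim
    have h1 : ∀ᶠ k in atTop, f (u k) ∈ unbddCompl K :=
      hftend.eventually_mem (hKopen.mem_nhds hy)
    have h2 : ∀ᶠ k in atTop, u k ∈ U := hulim.eventually_mem (hUopen.mem_nhds hxU)
    obtain ⟨k, hk1, hk2⟩ := (h1.and h2).exists
    have happ := (hmem (j k)).1.2.2 U hUrel hUc hUV W hWrel hUW f hf
    have hSX : S (j k) ⊆ X := fun z hz =>
      ⟨(hmem (j k)).1.1 hz, subset_closure (mem_iUnion.2 ⟨j k, hz⟩)⟩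
    have hmono : unbddCompl K ⊆ unbddCompl (f '' (S (j k) ∩ (closure U \ U))) :=
      unbddCompl_anti (image_mono (f := f) (inter_subset_inter_left _ hSX))
    exact happ ⟨u k, ⟨hj k, hk2⟩, rfl⟩ (hmono hk1)
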